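/- arXiv:2507.02482 — 4 statements merged into one kernel-verified Lean document; each statement's English description precedes it below -/
import Mathlib

section
/- Let m ≥ 1 and c ≥ 0, let R : ℝ → (real m×m matrices) be continuous, and let U : ℝ → (real m×m matrices) be differentiable with U'(t) + U(t)² + R(t) = 0 for all t ≥ 0, such that for every t ≥ 0 the matrix U(t) is positive semidefinite and c·I − U(t) is positive semidefinite. Then limsup_{t→∞} (1/t)∫₀ᵗ tr(U(s)²) ds = limsup_{t→∞} (−(1/t)∫₀ᵗ tr(R(s)) ds), and liminf_{t→∞} (1/t)∫₀ᵗ tr(U(s)²) ds = liminf_{t→∞} (−(1/t)∫₀ᵗ tr(R(s)) ds). -/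
open MeasureTheory intervalIntegral Filter

lemma psd_diag_nonneg {m : ℕ} {M : Matrix (Fin m) (Fin m) ℝ} (h : M.PosSemidef) (i : Fin m) :
    0 ≤ M i i := by
  have := h.dotProduct_mulVec_nonneg (Pi.single i 1)
  simpa [dotProduct, Matrix.mulVec, Pi.single_apply] using this

lemma psd_entry_abs_le {m : ℕ} {M : Matrix (Fin m) (Fin m) ℝ} (h : M.PosSemidef) {c : ℝ}
    (hd : ∀ i, M i i ≤ c) (i j : Fin m) : |M i j| ≤ c := by
  have hsym : M j i = M i j := by simpa using h.1.apply i j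
  by_cases hij : i = j
  · subst hij
    rw [abs_of_nonneg (psd_diag_nonneg h i)]
    exact hd i
  · have h1 := h.dotProduct_mulVec_nonneg (Pi.single i 1 + Pi.single j 1)
    have h2 := h.dotProduct_mulVec_nonneg (Pi.single i 1 - Pi.single j 1)
    simp [dotProduct, Matrix.mulVec, Pi.single_apply, hij, Ne.symm hij,
      mul_add, add_mul, sub_mul, mul_sub, Finset.sum_add_distrib, Finset.sum_sub_distrib] at h1 h2
    have hii := psd_diag_nonneg h i
    have hjj := psd_diag_nonneg h j
    rw [abs_le]
    constructor <;> nlinarith [h1, h2, hsym, hd i, hd j]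

lemma aux_limsup_add {ι : Type*} (f : Filter ι) [f.NeBot] (u w : ι → ℝ)
    (hb : IsBoundedUnder (· ≤ ·) f u) (hb' : IsBoundedUnder (· ≥ ·) f u)
    (h : Tendsto w f (nhds 0)) :
    limsup (u + w) f = limsup u f ∧ liminf (u + w) f = liminf u f := by
  have hw1 : IsBoundedUnder (· ≤ ·) f w := h.isBoundedUnder_le
  have hw2 : IsBoundedUnder (· ≥ ·) f w := h.isBoundedUnder_ge
  have hwsup : limsup w f = 0 := h.limsup_eq
  have hwinf : liminf w f = 0 := h.liminf_eq
  have hnw : Tendsto (-w) f (nhds 0) := by have := h.neg; rwa [neg_zero] at this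
  have hnwinf : liminf (-w) f = 0 := hnw.liminf_eq
  have huw1 : IsBoundedUnder (· ≤ ·) f (u + w) := isBoundedUnder_le_add hb hw1
  have huw2 : IsBoundedUnder (· ≥ ·) f (u + w) := isBoundedUnder_ge_add hb' hw2
  have key : (u + w) + (-w) = u := by funext x; simp
  constructor
  · apply le_antisymm
    · calc limsup (u + w) f ≤ limsup u f + limsup w f :=
            limsup_add_le hb' hb hw2.isCoboundedUnder_le hw1
        _ = limsup u f := by rw [hwsup, add_zero]
    · calc limsup u f = limsup u f + liminf w f := by rw [hwinf, add_zero]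
        _ ≤ limsup (u + w) f := le_limsup_add hb hb'.isCoboundedUnder_le hw1 hw2
  · apply le_antisymm
    · calc liminf (u + w) f = liminf (u + w) f + liminf (-w) f := by rw [hnwinf, add_zero]
        _ ≤ liminf ((u + w) + (-w)) f :=
            le_liminf_add huw2 huw1 hnw.isBoundedUnder_ge hnw.isBoundedUnder_le.isCoboundedUnder_ge
        _ = liminf u f := by rw [key]
    · calc liminf u f = liminf u f + liminf w f := by rw [hwinf, add_zero]
        _ ≤ liminf (u + w) f := le_liminf_add hb' hb hw2 hw1.isCoboundedUnder_ge

/-- For a bounded Riccati solution `0 ≤ U(t) ≤ c • I` of `U' + U² + R = 0`, the upper and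
lower asymptotic averages of `tr (U²)` coincide with those of `-tr R`. -/
theorem limsup_liminf_avg_trace_sq_eq (m : ℕ) (hm : 1 ≤ m) (c : ℝ) (hc : 0 ≤ c)
    (R U U' : ℝ → Matrix (Fin m) (Fin m) ℝ)
    (hR : Continuous R)
    (hU : ∀ t, ∀ i j, HasDerivAt (fun τ => U τ i j) (U' t i j) t)
    (hric : ∀ t, 0 ≤ t → U' t + U t * U t + R t = 0)
    (hpsd : ∀ t, 0 ≤ t → (U t).PosSemidef)
    (hle : ∀ t, 0 ≤ t → (c • (1 : Matrix (Fin m) (Fin m) ℝ) - U t).PosSemidef) :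
    limsup (fun t : ℝ => (1 / t) * ∫ s in (0:ℝ)..t, (U s * U s).trace) atTop
      = limsup (fun t : ℝ => -((1 / t) * ∫ s in (0:ℝ)..t, (R s).trace)) atTop ∧
    liminf (fun t : ℝ => (1 / t) * ∫ s in (0:ℝ)..t, (U s * U s).trace) atTop
      = liminf (fun t : ℝ => -((1 / t) * ∫ s in (0:ℝ)..t, (R s).trace)) atTop := by
  set f : ℝ → ℝ := fun t : ℝ => (1 / t) * ∫ s in (0:ℝ)..t, (U s * U s).trace with hfdef
  set g : ℝ → ℝ := fun t : ℝ => -((1 / t) * ∫ s in (0:ℝ)..t, (R s).trace) with hgdef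
  set w : ℝ → ℝ := fun t : ℝ => ((U t).trace - (U 0).trace) / t with hwdef
  -- continuity facts
  have hUc : Continuous U := by
    apply continuous_matrix
    intro i j
    exact continuous_iff_continuousAt.2 fun t => (hU t i j).differentiableAt.continuousAt
  have hUUc : Continuous fun s => (U s * U s).trace := (hUc.matrix_mul hUc).matrix_trace
  have hRc : Continuous fun s => (R s).trace := hR.matrix_trace
  -- derivative of the trace
  have htrd : ∀ s : ℝ, HasDerivAt (fun τ => (U τ).trace) ((U' s).trace) s := by
    intro s
    simpa [Matrix.trace, Matrix.diag] using HasDerivAt.fun_sum (fun i _ => hU s i i)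
  -- integral identity
  have key : ∀ t : ℝ, 0 ≤ t →
      (∫ s in (0:ℝ)..t, ((U s * U s).trace + (R s).trace))
        = (U 0).trace - (U t).trace := by
    intro t ht
    have hder : ∀ x ∈ Set.uIcc (0:ℝ) t,
        HasDerivAt (fun s => -(U s).trace) ((U x * U x).trace + (R x).trace) x := by
      intro x hx
      rw [Set.uIcc_of_le ht] at hx
      have h2 : U' x = -(U x * U x + R x) := by
        refine eq_neg_of_add_eq_zero_left ?_
        rw [← add_assoc]; exact hric x hx.1
      have := (htrd x).neg
      rw [h2] at this
      simp at this; exact this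
    have := intervalIntegral.integral_eq_sub_of_hasDerivAt hder
      ((hUUc.add hRc).intervalIntegrable 0 t)
    rw [this]; ring
  -- diagonal bounds
  have hdiag : ∀ t : ℝ, 0 ≤ t → ∀ i, 0 ≤ U t i i ∧ U t i i ≤ c := by
    intro t ht i
    refine ⟨psd_diag_nonneg (hpsd t ht) i, ?_⟩
    have := psd_diag_nonneg (hle t ht) i
    simp [Matrix.sub_apply, Matrix.smul_apply, Matrix.one_apply_eq] at this
    linarith
  -- trace bounds
  have htr : ∀ t : ℝ, 0 ≤ t → 0 ≤ (U t).trace ∧ (U t).trace ≤ (m : ℝ) * c := by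
    intro t ht
    constructor
    · exact Finset.sum_nonneg fun i _ => (hdiag t ht i).1
    · calc (U t).trace = ∑ i, U t i i := rfl
        _ ≤ ∑ _i : Fin m, c := Finset.sum_le_sum fun i _ => (hdiag t ht i).2
        _ = (m : ℝ) * c := by simp [Finset.sum_const, nsmul_eq_mul]
  -- bounds on tr (U²)
  have htrsq : ∀ s : ℝ, 0 ≤ s →
      0 ≤ (U s * U s).trace ∧ (U s * U s).trace ≤ (m : ℝ) ^ 2 * c ^ 2 := by
    intro s hs
    have hsym : ∀ i j, U s j i = U s i j := fun i j => by simpa using (hpsd s hs).1.apply i j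
    have htr_eq : (U s * U s).trace = ∑ i, ∑ j, U s i j * U s j i := by
      simp [Matrix.trace, Matrix.diag, Matrix.mul_apply]
    constructor
    · rw [htr_eq]
      refine Finset.sum_nonneg fun i _ => Finset.sum_nonneg fun j _ => ?_
      rw [hsym i j]; exact mul_self_nonneg _
    · rw [htr_eq]
      calc ∑ i, ∑ j, U s i j * U s j i ≤ ∑ _i : Fin m, ∑ _j : Fin m, c * c := by
            refine Finset.sum_le_sum fun i _ => Finset.sum_le_sum fun j _ => ?_
            rw [hsym i j, ← abs_mul_abs_self]
            have habs := psd_entry_abs_le (hpsd s hs) (fun k => (hdiag s hs k).2) i j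
            exact mul_le_mul habs habs (abs_nonneg _) hc
        _ = (m : ℝ) ^ 2 * c ^ 2 := by
            simp [Finset.sum_const, nsmul_eq_mul]; ring
  -- bounds on f eventually
  have hfb : ∀ t : ℝ, 1 ≤ t → 0 ≤ f t ∧ f t ≤ (m : ℝ) ^ 2 * c ^ 2 := by
    intro t ht
    have ht0 : (0:ℝ) < t := lt_of_lt_of_le one_pos ht
    have hint : IntervalIntegrable (fun s => (U s * U s).trace) volume 0 t := hUUc.intervalIntegrable (0:ℝ) t
    have hnn : 0 ≤ ∫ s in (0:ℝ)..t, (U s * U s).trace :=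
      intervalIntegral.integral_nonneg ht0.le fun u hu => (htrsq u hu.1).1
    have hub : (∫ s in (0:ℝ)..t, (U s * U s).trace) ≤ t * ((m : ℝ) ^ 2 * c ^ 2) := by
      have := intervalIntegral.integral_mono_on ht0.le hint
        (intervalIntegrable_const (μ := volume)) (fun u hu => (htrsq u hu.1).2)
      simpa [mul_comm, mul_left_comm, mul_assoc] using this
    constructor
    · exact mul_nonneg (by positivity) hnn
    · calc f t ≤ (1 / t) * (t * ((m : ℝ) ^ 2 * c ^ 2)) := by
            exact mul_le_mul_of_nonneg_left hub (by positivity)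
        _ = (m : ℝ) ^ 2 * c ^ 2 := by field_simp
  have hb : IsBoundedUnder (· ≤ ·) atTop f :=
    isBoundedUnder_of_eventually_le ((eventually_ge_atTop 1).mono fun t ht => (hfb t ht).2)
  have hb' : IsBoundedUnder (· ≥ ·) atTop f :=
    isBoundedUnder_of_eventually_ge ((eventually_ge_atTop 1).mono fun t ht => (hfb t ht).1)
  -- w tends to zero
  have hwt : Tendsto w atTop (nhds 0) := by
    have hC : Tendsto (fun t : ℝ => ((m : ℝ) * c + |(U 0).trace|) / t) atTop (nhds 0) :=
      tendsto_const_nhds.div_atTop tendsto_id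
    refine squeeze_zero_norm' ?_ hC
    filter_upwards [eventually_ge_atTop (1:ℝ)] with t ht
    have ht0 : (0:ℝ) < t := lt_of_lt_of_le one_pos ht
    have h1 := htr t ht0.le
    have hnum : |(U t).trace - (U 0).trace| ≤ (m : ℝ) * c + |(U 0).trace| := by
      calc |(U t).trace - (U 0).trace| ≤ |(U t).trace| + |(U 0).trace| := abs_sub _ _
        _ ≤ (m : ℝ) * c + |(U 0).trace| := by
            have : |(U t).trace| ≤ (m : ℝ) * c := by
              rw [abs_of_nonneg h1.1]; exact h1.2
            linarith
    have : ‖w t‖ = |(U t).trace - (U 0).trace| / t := by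
      rw [hwdef]; simp [abs_div, abs_of_pos ht0]
    rw [this]
    exact div_le_div_of_nonneg_right hnum ht0.le |>.trans_eq rfl
  -- eventual identity g = f + w
  have heq : ∀ t : ℝ, 1 ≤ t → g t = (f + w) t := by
    intro t ht
    have ht0 : (0:ℝ) < t := lt_of_lt_of_le one_pos ht
    have hsplit : (∫ s in (0:ℝ)..t, ((U s * U s).trace + (R s).trace))
        = (∫ s in (0:ℝ)..t, (U s * U s).trace) + ∫ s in (0:ℝ)..t, (R s).trace :=
      intervalIntegral.integral_add (hUUc.intervalIntegrable 0 t) (hRc.intervalIntegrable 0 t)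
    have hkey := key t ht0.le
    rw [hsplit] at hkey
    have hRint : (∫ s in (0:ℝ)..t, (R s).trace)
        = (U 0).trace - (U t).trace - ∫ s in (0:ℝ)..t, (U s * U s).trace := by linarith
    show g t = f t + w t
    rw [hgdef, hfdef, hwdef]
    simp only
    rw [hRint]
    field_simp
    ring
  have heqf : g =ᶠ[atTop] (f + w) := (eventually_ge_atTop 1).mono heq
  obtain ⟨hsup, hinf⟩ := aux_limsup_add atTop f w hb hb' hwt
  constructor
  · rw [show limsup g atTop = limsup (f + w) atTop from limsup_congr heqf, hsup]
  · rw [show liminf g atTop = liminf (f + w) atTop from liminf_congr heqf, hinf]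
end

section
/- Let m ≥ 1 and c > 0, let R : ℝ → (real m×m matrices) be continuous, and let U : ℝ → (real m×m matrices) be differentiable with U'(t) + U(t)² + R(t) = 0 for all t ≥ 0, such that for every t ≥ 0 the matrix U(t) is positive semidefinite and c·I − U(t) is positive semidefinite. Suppose the limit χ := lim_{t→∞} (1/t)∫₀ᵗ tr(U(s)) ds exists. Then −limsup_{t→∞} (1/t)∫₀ᵗ tr(R(s)) ds ≤ c·χ. -/
open MeasureTheory intervalIntegral Filter Matrix

private lemma trace_nonneg_of_psd {m : ℕ} {A : Matrix (Fin m) (Fin m) ℝ}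
    (hA : A.PosSemidef) : 0 ≤ A.trace := by
  have h : ∀ i, 0 ≤ A i i := by
    intro i
    have := hA.dotProduct_mulVec_nonneg (Pi.single i 1)
    simpa [dotProduct, Matrix.mulVec, Pi.single_apply, Finset.sum_ite_eq,
      Finset.mul_sum] using this
  exact Finset.sum_nonneg fun i _ => h i

open scoped MatrixOrder in
private lemma trace_mul_nonneg_of_psd {m : ℕ} {A B : Matrix (Fin m) (Fin m) ℝ}
    (hA : A.PosSemidef) (hB : B.PosSemidef) : 0 ≤ (A * B).trace := by
  have hS : (CFC.sqrt A).PosSemidef := (CFC.sqrt_nonneg A).posSemidef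
  have hsq : CFC.sqrt A * CFC.sqrt A = A := CFC.sqrt_mul_sqrt_self A hA.nonneg
  have h1 : A * B = CFC.sqrt A * (CFC.sqrt A * B) := by rw [← mul_assoc, hsq]
  have h2 : (A * B).trace = (CFC.sqrt A * B * CFC.sqrt A).trace := by
    rw [h1, Matrix.trace_mul_comm, mul_assoc]
  rw [h2]
  have hps : ((CFC.sqrt A * B) * (CFC.sqrt A)ᴴ).PosSemidef := hB.mul_mul_conjTranspose_same (CFC.sqrt A)
  rw [hS.isHermitian.eq] at hps
  exact trace_nonneg_of_psd hps

/-- Left inequality of Lemma 3.1: for a bounded Riccati solution `0 ≤ U(t) ≤ c • I` with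
`c > 0`, if `χ = lim (1/t) ∫₀ᵗ tr U` exists, then `-limsup (1/t) ∫₀ᵗ tr R ≤ c * χ`. -/
theorem neg_limsup_avg_trace_R_le (m : ℕ) (hm : 1 ≤ m) (c : ℝ) (hc : 0 < c)
    (R U U' : ℝ → Matrix (Fin m) (Fin m) ℝ)
    (hR : Continuous R)
    (hU : ∀ t, ∀ i j, HasDerivAt (fun τ => U τ i j) (U' t i j) t)
    (hric : ∀ t, 0 ≤ t → U' t + U t * U t + R t = 0)
    (hpsd : ∀ t, 0 ≤ t → (U t).PosSemidef)
    (hle : ∀ t, 0 ≤ t → (c • (1 : Matrix (Fin m) (Fin m) ℝ) - U t).PosSemidef)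
    (χ : ℝ)
    (hχ : Tendsto (fun t : ℝ => (1 / t) * ∫ s in (0:ℝ)..t, (U s).trace) atTop (nhds χ)) :
    -(limsup (fun t : ℝ => (1 / t) * ∫ s in (0:ℝ)..t, (R s).trace) atTop) ≤ c * χ := by
  -- continuity of U
  have hUc : Continuous U := continuous_matrix fun i j =>
    Differentiable.continuous fun t => (hU t i j).differentiableAt
  have htrU : Continuous fun s => (U s).trace := hUc.matrix_trace
  have htrQ : Continuous fun s => (U s * U s).trace := (hUc.matrix_mul hUc).matrix_trace
  have htrR : Continuous fun s => (R s).trace := hR.matrix_trace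
  -- derivative of trace
  have htrd : ∀ t, HasDerivAt (fun τ => (U τ).trace) ((U' t).trace) t := by
    intro t
    have : HasDerivAt (fun τ => ∑ i, U τ i i) (∑ i, U' t i i) t :=
      HasDerivAt.fun_sum fun i _ => hU t i i
    simpa [Matrix.trace, Matrix.diag] using this
  -- trace bounds
  have htrU_nonneg : ∀ s, 0 ≤ s → 0 ≤ (U s).trace := fun s hs =>
    trace_nonneg_of_psd (hpsd s hs)
  have htrU_le : ∀ s, 0 ≤ s → (U s).trace ≤ m * c := by
    intro s hs
    have h := trace_nonneg_of_psd (hle s hs)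
    rw [Matrix.trace_sub, Matrix.trace_smul, Matrix.trace_one] at h
    simp only [Fintype.card_fin, smul_eq_mul] at h
    linarith [h]
  have htrQ_le : ∀ s, 0 ≤ s → (U s * U s).trace ≤ c * (U s).trace := by
    intro s hs
    have h := trace_mul_nonneg_of_psd (hpsd s hs) (hle s hs)
    rw [Matrix.mul_sub, Matrix.trace_sub] at h
    have h2 : (U s * c • (1 : Matrix (Fin m) (Fin m) ℝ)).trace = c * (U s).trace := by
      rw [Matrix.mul_smul, mul_one, Matrix.trace_smul, smul_eq_mul]
    rw [h2] at h
    linarith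
  have htrQ_nonneg : ∀ s, 0 ≤ s → 0 ≤ (U s * U s).trace := fun s hs =>
    trace_mul_nonneg_of_psd (hpsd s hs) (hpsd s hs)
  -- key identity for t ≥ 0
  have hkey : ∀ t : ℝ, 0 ≤ t →
      (∫ s in (0:ℝ)..t, (R s).trace) =
      ((U 0).trace - (U t).trace) - ∫ s in (0:ℝ)..t, (U s * U s).trace := by
    intro t ht
    have huIcc : Set.uIcc (0:ℝ) t = Set.Icc 0 t := Set.uIcc_of_le ht
    have heq : ∀ s ∈ Set.uIcc (0:ℝ) t,
        (R s).trace = -(U' s).trace - (U s * U s).trace := by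
      intro s hs
      rw [huIcc] at hs
      have h := hric s hs.1
      have h3 : R s = -(U' s + U s * U s) := eq_neg_of_add_eq_zero_right h
      rw [h3, Matrix.trace_neg, Matrix.trace_add]
      ring
    have hint1 : IntervalIntegrable (fun s => (U' s).trace) volume 0 t := by
      apply ContinuousOn.intervalIntegrable
      apply ContinuousOn.congr (f := fun s => -(U s * U s).trace - (R s).trace)
        ((htrQ.neg.sub htrR).continuousOn)
      intro s hs
      rw [huIcc] at hs
      have h := hric s hs.1
      have h3 : U' s + U s * U s = -(R s) := eq_neg_of_add_eq_zero_left h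
      have h4 : U' s = -(R s) - U s * U s := eq_sub_of_add_eq h3
      show (U' s).trace = -(U s * U s).trace - (R s).trace
      rw [h4, Matrix.trace_sub, Matrix.trace_neg]
      ring
    have hint2 : IntervalIntegrable (fun s => (U s * U s).trace) volume 0 t :=
      htrQ.intervalIntegrable 0 t
    have hftc : (∫ s in (0:ℝ)..t, (U' s).trace) = (U t).trace - (U 0).trace :=
      intervalIntegral.integral_eq_sub_of_hasDerivAt (fun s _ => htrd s) hint1
    calc (∫ s in (0:ℝ)..t, (R s).trace)
        = ∫ s in (0:ℝ)..t, (-(U' s).trace - (U s * U s).trace) :=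
          intervalIntegral.integral_congr heq
      _ = (∫ s in (0:ℝ)..t, -(U' s).trace) - ∫ s in (0:ℝ)..t, (U s * U s).trace :=
          intervalIntegral.integral_sub hint1.neg hint2
      _ = -((U t).trace - (U 0).trace) - ∫ s in (0:ℝ)..t, (U s * U s).trace := by
          rw [intervalIntegral.integral_neg, hftc]
      _ = ((U 0).trace - (U t).trace) - ∫ s in (0:ℝ)..t, (U s * U s).trace := by ring
  set g : ℝ → ℝ := fun t => (1 / t) * ∫ s in (0:ℝ)..t, (R s).trace with hg
  set h : ℝ → ℝ := fun t => -(m * c) / t - c * ((1 / t) * ∫ s in (0:ℝ)..t, (U s).trace)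
    with hhdef
  -- eventual lower bound g ≥ h
  have hlow : ∀ᶠ t in atTop, h t ≤ g t := by
    filter_upwards [eventually_ge_atTop (1:ℝ)] with t ht
    have ht0 : (0:ℝ) ≤ t := by linarith
    have htpos : (0:ℝ) < t := by linarith
    have hIQle : (∫ s in (0:ℝ)..t, (U s * U s).trace) ≤
        c * ∫ s in (0:ℝ)..t, (U s).trace := by
      rw [← intervalIntegral.integral_const_mul]
      apply intervalIntegral.integral_mono_on ht0
        (htrQ.intervalIntegrable 0 t) ((continuous_const.mul htrU).intervalIntegrable 0 t)
      intro s hs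
      exact htrQ_le s hs.1
    have hUt := htrU_le t ht0
    have hU0 := htrU_nonneg 0 le_rfl
    have hinv : (0:ℝ) < 1 / t := by positivity
    rw [hg]
    simp only
    rw [hkey t ht0]
    rw [hhdef]
    simp only
    rw [div_eq_mul_inv (-(m*c)) t, ← one_div]
    have hstep : -(m * c) - c * ∫ s in (0:ℝ)..t, (U s).trace ≤
        ((U 0).trace - (U t).trace) - ∫ s in (0:ℝ)..t, (U s * U s).trace := by
      linarith [hIQle, hU0, hUt]
    calc -(m * c) * (1 / t) - c * ((1 / t) * ∫ s in (0:ℝ)..t, (U s).trace)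
        = (1 / t) * (-(m * c) - c * ∫ s in (0:ℝ)..t, (U s).trace) := by ring
      _ ≤ (1 / t) * (((U 0).trace - (U t).trace) - ∫ s in (0:ℝ)..t, (U s * U s).trace) :=
          by exact mul_le_mul_of_nonneg_left hstep (le_of_lt hinv)
  -- eventual upper bound
  have hupper : ∀ᶠ t in atTop, g t ≤ (U 0).trace := by
    filter_upwards [eventually_ge_atTop (1:ℝ)] with t ht
    have ht0 : (0:ℝ) ≤ t := by linarith
    have htpos : (0:ℝ) < t := by linarith
    have hinv : (0:ℝ) < 1 / t := by positivity
    have hinv1 : 1 / t ≤ 1 := by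
      rw [div_le_one htpos]; linarith
    have hIQ : (0:ℝ) ≤ ∫ s in (0:ℝ)..t, (U s * U s).trace := by
      apply intervalIntegral.integral_nonneg ht0
      intro s hs; exact htrQ_nonneg s hs.1
    have hUt := htrU_nonneg t ht0
    have hU0 := htrU_nonneg 0 le_rfl
    rw [hg]; simp only; rw [hkey t ht0]
    have h1 : ((U 0).trace - (U t).trace) - (∫ s in (0:ℝ)..t, (U s * U s).trace)
        ≤ (U 0).trace := by linarith
    calc (1 / t) * (((U 0).trace - (U t).trace) - ∫ s in (0:ℝ)..t, (U s * U s).trace)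
        ≤ (1 / t) * (U 0).trace := mul_le_mul_of_nonneg_left h1 (le_of_lt hinv)
      _ ≤ 1 * (U 0).trace := mul_le_mul_of_nonneg_right hinv1 hU0
      _ = (U 0).trace := one_mul _
  have hbdd : IsBoundedUnder (· ≤ ·) atTop g := ⟨(U 0).trace, eventually_map.mpr hupper⟩
  -- h tends to -(c*χ)
  have hhten : Tendsto h atTop (nhds (-(c * χ))) := by
    have h1 : Tendsto (fun t : ℝ => -(m * c) / t) atTop (nhds 0) :=
      tendsto_const_nhds.div_atTop tendsto_id
    have h2 : Tendsto (fun t : ℝ => c * ((1 / t) * ∫ s in (0:ℝ)..t, (U s).trace))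
        atTop (nhds (c * χ)) := hχ.const_mul c
    have h3 := h1.sub h2
    rw [zero_sub] at h3
    exact h3
  -- conclude
  rw [neg_le]
  apply le_of_forall_sub_le
  intro ε hε
  have hev : ∀ᶠ t in atTop, -(c * χ) - ε ≤ g t := by
    have h1 : ∀ᶠ t in atTop, -(c * χ) - ε ≤ h t :=
      hhten.eventually (eventually_ge_nhds (by linarith))
    filter_upwards [h1, hlow] with t h1 h2
    linarith
  exact le_limsup_of_frequently_le hev.frequently hbdd
end

section
/- Let m ≥ 1 and c ≥ 0, let R : ℝ → (real m×m matrices) be continuous, and let U : ℝ → (real m×m matrices) be differentiable with U'(t) + U(t)² + R(t) = 0 for all t ≥ 0, such that for every t ≥ 0 the matrix U(t) is positive semidefinite and c·I − U(t) is positive semidefinite. Suppose the limit χ := lim_{t→∞} (1/t)∫₀ᵗ tr(U(s)) ds exists. Then χ ≤ √( m · (−liminf_{t→∞} (1/t)∫₀ᵗ tr(R(s)) ds) ). -/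
open MeasureTheory intervalIntegral Filter Finset

lemma psd_diag_nonneg_s6 {n : ℕ} {A : Matrix (Fin n) (Fin n) ℝ} (hA : A.PosSemidef) (i : Fin n) :
    0 ≤ A i i := by
  have := hA.dotProduct_mulVec_nonneg (Pi.single i 1)
  simpa [dotProduct, Matrix.mulVec, Pi.single_apply] using this

lemma psd_trace_nonneg {n : ℕ} {A : Matrix (Fin n) (Fin n) ℝ} (hA : A.PosSemidef) :
    0 ≤ A.trace :=
  Finset.sum_nonneg fun i _ => psd_diag_nonneg_s6 hA i

open scoped MatrixOrder in
lemma psd_trace_mul_nonneg {n : ℕ} {A B : Matrix (Fin n) (Fin n) ℝ}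
    (hA : A.PosSemidef) (hB : B.PosSemidef) : 0 ≤ (A * B).trace := by
  set S := CFC.sqrt A with hSdef
  have hS : S * S = A := by
    have := CFC.sq_sqrt A hA.nonneg; rwa [pow_two] at this
  have h1 : (A * B).trace = (S * B * S).trace := by
    rw [← hS, Matrix.mul_assoc, Matrix.trace_mul_comm, Matrix.mul_assoc]
  have h2 : (S * B * S).PosSemidef := by
    have hherm : Matrix.conjTranspose S = S := (Matrix.nonneg_iff_posSemidef.mp (CFC.sqrt_nonneg A)).isHermitian
    have := hB.conjTranspose_mul_mul_same (B := S)
    rwa [hherm] at this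
  rw [h1]
  exact psd_trace_nonneg h2

lemma psd_trace_sq_le {n : ℕ} {A : Matrix (Fin n) (Fin n) ℝ} (hA : A.PosSemidef) :
    A.trace ^ 2 ≤ (n : ℝ) * (A * A).trace := by
  have hsym : ∀ i j, A j i = A i j := by
    intro i j
    have := congrFun (congrFun hA.1 i) j
    simpa [Matrix.conjTranspose_apply] using this
  have h1 : A.trace ^ 2 ≤ (n : ℝ) * ∑ i, (A i i) ^ 2 := by
    have := sq_sum_le_card_mul_sum_sq (s := (univ : Finset (Fin n))) (f := fun i => A i i)
    simp at this; exact this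
  have h2 : ∑ i, (A i i) ^ 2 ≤ ∑ i : Fin n, ∑ j : Fin n, (A i j) ^ 2 :=
    Finset.sum_le_sum fun i _ =>
      Finset.single_le_sum (f := fun j => (A i j) ^ 2) (fun j _ => sq_nonneg _) (mem_univ i)
  have h3 : (A * A).trace = ∑ i : Fin n, ∑ j : Fin n, (A i j) ^ 2 := by
    simp only [Matrix.trace, Matrix.diag, Matrix.mul_apply]
    exact Finset.sum_congr rfl fun i _ => Finset.sum_congr rfl fun j _ => by
      rw [hsym i j]; ring
  rw [h3]
  exact h1.trans (mul_le_mul_of_nonneg_left h2 (Nat.cast_nonneg n))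

lemma integral_sq_le_of_continuous {f : ℝ → ℝ} (hf : Continuous f) {t : ℝ} (ht : 0 < t) :
    (∫ s in (0:ℝ)..t, f s) ^ 2 ≤ t * ∫ s in (0:ℝ)..t, (f s) ^ 2 := by
  set I := ∫ s in (0:ℝ)..t, f s with hI
  set a := I / t with ha
  have hint1 : IntervalIntegrable f volume 0 t := hf.intervalIntegrable _ _
  have hint2 : IntervalIntegrable (fun s => (f s) ^ 2) volume 0 t :=
    (hf.pow 2).intervalIntegrable _ _
  have h0 : 0 ≤ ∫ s in (0:ℝ)..t, (f s - a) ^ 2 :=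
    intervalIntegral.integral_nonneg ht.le fun x _ => sq_nonneg _
  have hexp : ∫ s in (0:ℝ)..t, (f s - a) ^ 2
      = (∫ s in (0:ℝ)..t, (f s) ^ 2) - 2 * a * I + a ^ 2 * t := by
    have hfun : ∀ s, (f s - a) ^ 2 = (f s) ^ 2 - (2 * a) * f s + a ^ 2 := fun s => by ring
    simp_rw [hfun]
    rw [intervalIntegral.integral_add (hint2.sub (hint1.const_mul _)) intervalIntegrable_const,
      intervalIntegral.integral_sub hint2 (hint1.const_mul _),
      intervalIntegral.integral_const_mul, intervalIntegral.integral_const]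
    simp [← hI]
    ring
  rw [hexp] at h0
  have haI : I = a * t := by rw [ha]; field_simp
  rw [haI] at h0 ⊢
  nlinarith [h0, ht, mul_nonneg ht.le h0]

/-- Right inequality of Lemma 3.1: for a bounded Riccati solution `0 ≤ U(t) ≤ c • I`, if
`χ = lim (1/t) ∫₀ᵗ tr U` exists, then `χ ≤ √(m * (-liminf (1/t) ∫₀ᵗ tr R))`. -/
theorem lyapunov_le_sqrt_neg_liminf (m : ℕ) (hm : 1 ≤ m) (c : ℝ) (hc : 0 ≤ c)
    (R U U' : ℝ → Matrix (Fin m) (Fin m) ℝ)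
    (hR : Continuous R)
    (hU : ∀ t, ∀ i j, HasDerivAt (fun τ => U τ i j) (U' t i j) t)
    (hric : ∀ t, 0 ≤ t → U' t + U t * U t + R t = 0)
    (hpsd : ∀ t, 0 ≤ t → (U t).PosSemidef)
    (hle : ∀ t, 0 ≤ t → (c • (1 : Matrix (Fin m) (Fin m) ℝ) - U t).PosSemidef)
    (χ : ℝ)
    (hχ : Tendsto (fun t : ℝ => (1 / t) * ∫ s in (0:ℝ)..t, (U s).trace) atTop (nhds χ)) :
    χ ≤ Real.sqrt ((m : ℝ) *
      (-(liminf (fun t : ℝ => (1 / t) * ∫ s in (0:ℝ)..t, (R s).trace) atTop))) := by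
  have hm0 : (0:ℝ) < m := by exact_mod_cast hm
  -- abbreviations
  set T : ℝ → ℝ := fun τ => (U τ).trace with hTdef
  set Q : ℝ → ℝ := fun τ => (U τ * U τ).trace with hQdef
  set P : ℝ → ℝ := fun τ => (R τ).trace with hPdef
  -- continuity
  have hUc : ∀ i j, Continuous fun τ => U τ i j := by
    intro i j
    have hd : Differentiable ℝ (fun τ => U τ i j) := fun x => (hU x i j).differentiableAt
    exact hd.continuous
  have hTc : Continuous T := by
    have : Continuous fun τ => ∑ i, U τ i i :=
      continuous_finset_sum _ fun i _ => hUc i i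
    simpa [hTdef, Matrix.trace, Matrix.diag] using this
  have hQc : Continuous Q := by
    have : Continuous fun τ => ∑ i, ∑ j, U τ i j * U τ j i :=
      continuous_finset_sum _ fun i _ =>
        continuous_finset_sum _ fun j _ => (hUc i j).mul (hUc j i)
    simpa [hQdef, Matrix.trace, Matrix.diag, Matrix.mul_apply] using this
  have hPc : Continuous P := by
    have : Continuous fun τ => ∑ i, R τ i i :=
      continuous_finset_sum _ fun i _ =>
        (continuous_apply i).comp ((continuous_apply i).comp hR)
    simpa [hPdef, Matrix.trace, Matrix.diag] using this
  -- derivative of the trace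
  have hTd : ∀ x, HasDerivAt T ((U' x).trace) x := by
    intro x
    have h := HasDerivAt.fun_sum (fun i (_ : i ∈ (univ : Finset (Fin m))) => hU x i i)
    simpa [hTdef, Matrix.trace, Matrix.diag] using h
  -- scalar Riccati identity
  have htr : ∀ x, 0 ≤ x → (U' x).trace = -(Q x) - P x := by
    intro x hx
    have h := congrArg Matrix.trace (hric x hx)
    simp only [Matrix.trace_add, Matrix.trace_zero] at h
    have hQx : Q x = (U x * U x).trace := rfl
    have hPx : P x = (R x).trace := rfl
    linarith [h, hQx, hPx]
  -- pointwise bounds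
  have hTnn : ∀ s, 0 ≤ s → 0 ≤ T s := fun s hs => psd_trace_nonneg (hpsd s hs)
  have hTub : ∀ s, 0 ≤ s → T s ≤ c * m := by
    intro s hs
    have h := psd_trace_nonneg (hle s hs)
    rw [Matrix.trace_sub, Matrix.trace_smul, Matrix.trace_one] at h
    simp only [smul_eq_mul, Fintype.card_fin] at h
    linarith
  have hQub : ∀ s, 0 ≤ s → Q s ≤ c * (c * m) := by
    intro s hs
    have h := psd_trace_mul_nonneg (hpsd s hs) (hle s hs)
    rw [Matrix.mul_sub, Matrix.mul_smul, Matrix.mul_one, Matrix.trace_sub,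
      Matrix.trace_smul] at h
    simp only [smul_eq_mul, Fintype.card_fin] at h
    have h2 := hTub s hs
    have h3 : Q s ≤ c * T s := by
      have : (0:ℝ) ≤ c * T s - Q s := h
      linarith
    calc Q s ≤ c * T s := h3
      _ ≤ c * (c * m) := mul_le_mul_of_nonneg_left h2 hc
  have hQsq : ∀ s, 0 ≤ s → (T s) ^ 2 ≤ (m : ℝ) * Q s := fun s hs =>
    psd_trace_sq_le (hpsd s hs)
  -- fundamental theorem of calculus
  have hFTC : ∀ t : ℝ, 0 ≤ t →
      (∫ s in (0:ℝ)..t, P s) = T 0 - T t - ∫ s in (0:ℝ)..t, Q s := by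
    intro t ht
    have hderiv : ∀ x ∈ Set.uIcc (0:ℝ) t, HasDerivAt T (-(Q x) - P x) x := by
      intro x hx
      rw [Set.uIcc_of_le ht] at hx
      have h := hTd x
      rwa [htr x hx.1] at h
    have hint : IntervalIntegrable (fun s => -(Q s) - P s) volume 0 t :=
      (hQc.neg.sub hPc).intervalIntegrable _ _
    have h := intervalIntegral.integral_eq_sub_of_hasDerivAt hderiv hint
    rw [intervalIntegral.integral_sub (f := fun s => -(Q s)) (hQc.neg.intervalIntegrable _ _)
      (hPc.intervalIntegrable _ _), intervalIntegral.integral_neg] at h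
    linarith
  -- the comparison function
  set g : ℝ → ℝ := fun t => T 0 / t - ((1 / t) * ∫ s in (0:ℝ)..t, T s) ^ 2 / m with hgdef
  have hglim : Tendsto g atTop (nhds (0 - χ ^ 2 / m)) := by
    apply Tendsto.sub
    · exact Tendsto.div_atTop tendsto_const_nhds tendsto_id
    · exact (hχ.pow 2).div_const _
  -- eventual inequality
  have hmain : ∀ᶠ t in atTop, (1 / t) * (∫ s in (0:ℝ)..t, P s) ≤ g t := by
    filter_upwards [eventually_ge_atTop (1:ℝ)] with t ht1
    have ht0 : (0:ℝ) < t := lt_of_lt_of_le one_pos ht1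
    have hCS := integral_sq_le_of_continuous hTc ht0
    have hmono : (∫ s in (0:ℝ)..t, (T s) ^ 2) ≤ ∫ s in (0:ℝ)..t, (m : ℝ) * Q s := by
      apply intervalIntegral.integral_mono_on ht0.le
        ((hTc.pow 2).intervalIntegrable _ _)
        ((continuous_const.mul hQc).intervalIntegrable _ _)
      intro x hx
      exact hQsq x hx.1
    rw [intervalIntegral.integral_const_mul] at hmono
    have hIP := hFTC t ht0.le
    have hTt := hTnn t ht0.le
    set IT := ∫ s in (0:ℝ)..t, T s
    set IT2 := ∫ s in (0:ℝ)..t, (T s) ^ 2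
    set IQ := ∫ s in (0:ℝ)..t, Q s
    rw [hIP]
    have hq : IT ^ 2 ≤ t * ((m : ℝ) * IQ) := by
      calc IT ^ 2 ≤ t * IT2 := hCS
        _ ≤ t * ((m : ℝ) * IQ) := mul_le_mul_of_nonneg_left hmono ht0.le
    show 1 / t * (T 0 - T t - IQ) ≤ T 0 / t - (1 / t * IT) ^ 2 / m
    rw [← sub_nonneg]
    have e1 : T 0 / t - (1 / t * IT) ^ 2 / (m : ℝ) - 1 / t * (T 0 - T t - IQ)
        = (T t * (t * (m : ℝ)) + IQ * (t * (m : ℝ)) - IT ^ 2) / (t ^ 2 * (m : ℝ)) := by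
      field_simp
      ring
    rw [e1]
    apply div_nonneg _ (by positivity)
    nlinarith [mul_nonneg (mul_nonneg ht0.le hm0.le) hTt]
  -- eventual lower bound for F
  have hFlow : ∀ᶠ t in atTop,
      -(c * m) - c * (c * (m : ℝ)) ≤ (1 / t) * ∫ s in (0:ℝ)..t, P s := by
    filter_upwards [eventually_ge_atTop (1:ℝ)] with t ht1
    have ht0 : (0:ℝ) < t := lt_of_lt_of_le one_pos ht1
    have hIQ : (∫ s in (0:ℝ)..t, Q s) ≤ t * (c * (c * m)) := by
      have hmono : (∫ s in (0:ℝ)..t, Q s) ≤ ∫ _s in (0:ℝ)..t, c * (c * (m : ℝ)) := by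
        apply intervalIntegral.integral_mono_on ht0.le (hQc.intervalIntegrable _ _)
          intervalIntegrable_const
        intro x hx
        exact hQub x hx.1
      rwa [intervalIntegral.integral_const, smul_eq_mul, sub_zero] at hmono
    have hIP := hFTC t ht0.le
    rw [hIP]
    have hT0 := hTnn 0 le_rfl
    have hTt := hTub t ht0.le
    have hlow : -(c * (m : ℝ)) - t * (c * (c * m)) ≤ T 0 - T t - ∫ s in (0:ℝ)..t, Q s := by
      linarith
    have h6 : (1 / t) * (-(c * (m : ℝ)) - t * (c * (c * m)))
        ≤ (1 / t) * (T 0 - T t - ∫ s in (0:ℝ)..t, Q s) :=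
      mul_le_mul_of_nonneg_left hlow (by positivity)
    have h7 : -(c * (m : ℝ)) - c * (c * m) ≤ (1 / t) * (-(c * (m : ℝ)) - t * (c * (c * m))) := by
      have he : (1 / t) * (-(c * (m : ℝ)) - t * (c * (c * m)))
          = -(c * (m : ℝ)) / t - c * (c * m) := by
        field_simp
      rw [he]
      have hcm : c * (m : ℝ) / t ≤ c * m := by
        rw [div_le_iff₀ ht0]
        nlinarith [mul_nonneg hc hm0.le]
      have : -(c * (m : ℝ)) ≤ -(c * (m : ℝ)) / t := by
        rw [neg_div]
        linarith
      linarith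
    linarith
  -- pass to liminfs
  have hFbdd : IsBoundedUnder (· ≥ ·) atTop
      (fun t : ℝ => (1 / t) * ∫ s in (0:ℝ)..t, P s) :=
    isBoundedUnder_of_eventually_ge hFlow
  have hgcob : IsCoboundedUnder (· ≥ ·) atTop g := hglim.isCoboundedUnder_ge
  have h1 : liminf (fun t : ℝ => (1 / t) * ∫ s in (0:ℝ)..t, P s) atTop
      ≤ liminf g atTop := liminf_le_liminf hmain hFbdd hgcob
  have h2 : liminf g atTop = 0 - χ ^ 2 / m := hglim.liminf_eq
  apply Real.le_sqrt_of_sq_le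
  have hly : liminf (fun t : ℝ => (1 / t) * ∫ s in (0:ℝ)..t, P s) atTop ≤ -(χ ^ 2 / m) := by
    rw [h2] at h1
    linarith
  have h3 : χ ^ 2 / m
      ≤ -liminf (fun t : ℝ => (1 / t) * ∫ s in (0:ℝ)..t, P s) atTop := by
    linarith
  calc χ ^ 2 = (m : ℝ) * (χ ^ 2 / m) := by field_simp
    _ ≤ (m : ℝ) * -liminf (fun t : ℝ => (1 / t) * ∫ s in (0:ℝ)..t, P s) atTop :=
      mul_le_mul_of_nonneg_left h3 hm0.le
end

section
/- Let m ≥ 1, let (X, μ) be a probability space, and let U : X → (real m×m matrices) be measurable such that U(x) is symmetric for every x, and such that x ↦ tr(U(x)) and x ↦ tr(U(x)·U(x)) are integrable with respect to μ. If ∫ tr(U(x)) dμ(x) = √( m · ∫ tr(U(x)·U(x)) dμ(x) ), then for μ-almost every x one has U(x) = λ·I, where λ = (∫ tr(U) dμ)/m; in particular tr(U(x)) is μ-almost everywhere equal to the constant ∫ tr(U) dμ. -/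
open MeasureTheory

open Matrix

lemma trace_mul_self_eq (m : ℕ) (C : Matrix (Fin m) (Fin m) ℝ) (hC : C.IsSymm) :
    (C * C).trace = ∑ i, ∑ j, (C i j)^2 := by
  simp only [Matrix.trace, Matrix.diag, Matrix.mul_apply]
  refine Finset.sum_congr rfl fun i _ => Finset.sum_congr rfl fun j _ => ?_
  rw [hC.apply j i]; ring

lemma trace_mul_self_nonneg (m : ℕ) (C : Matrix (Fin m) (Fin m) ℝ) (hC : C.IsSymm) :
    0 ≤ (C * C).trace := by
  rw [trace_mul_self_eq m C hC]
  positivity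

lemma eq_zero_of_trace_mul_self (m : ℕ) (C : Matrix (Fin m) (Fin m) ℝ) (hC : C.IsSymm)
    (h : (C * C).trace = 0) : C = 0 := by
  rw [trace_mul_self_eq m C hC] at h
  ext i j
  have h1 : ∀ i ∈ Finset.univ, (0:ℝ) ≤ ∑ j, (C i j)^2 := fun i _ => by positivity
  have h2 := (Finset.sum_eq_zero_iff_of_nonneg h1).1 h i (Finset.mem_univ i)
  have h3 : ∀ j ∈ Finset.univ, (0:ℝ) ≤ (C i j)^2 := fun j _ => by positivity
  have := (Finset.sum_eq_zero_iff_of_nonneg h3).1 h2 j (Finset.mem_univ j)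
  simpa using pow_eq_zero_iff (n := 2) (by norm_num) |>.1 this

lemma ptA (m : ℕ) (hm : 1 ≤ m) (A : Matrix (Fin m) (Fin m) ℝ) (hA : A.IsSymm) :
    A.trace^2 ≤ m * (A * A).trace ∧
    (A.trace^2 = m * (A * A).trace → A = (A.trace / m) • (1 : Matrix (Fin m) (Fin m) ℝ)) := by
  have hm0 : (m : ℝ) ≠ 0 := by positivity
  set lam : ℝ := A.trace / m with hlam
  set C : Matrix (Fin m) (Fin m) ℝ := A - lam • 1 with hCdef
  have hCsymm : C.IsSymm := by
    rw [hCdef, Matrix.IsSymm, Matrix.transpose_sub, hA, Matrix.transpose_smul, Matrix.transpose_one]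
  have hCC : C * C = A * A - (2*lam) • A + (lam^2) • (1 : Matrix (Fin m) (Fin m) ℝ) := by
    rw [hCdef]
    rw [sub_mul, mul_sub, mul_sub, Matrix.smul_mul, Matrix.mul_smul, Matrix.mul_smul,
      Matrix.one_mul, Matrix.mul_one]
    simp only [Matrix.smul_mul, Matrix.mul_one, smul_smul]
    rw [sq]
    module
  have htr : (C * C).trace = (A*A).trace - A.trace^2 / m := by
    rw [hCC, Matrix.trace_add, Matrix.trace_sub, Matrix.trace_smul, Matrix.trace_smul,
      Matrix.trace_one]
    simp only [smul_eq_mul, Fintype.card_fin]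
    field_simp [hlam]
    rw [hlam]; field_simp; ring
  constructor
  · have := trace_mul_self_nonneg m C hCsymm
    rw [htr] at this
    have hmpos : (0:ℝ) < m := by positivity
    have h' : A.trace^2 / m ≤ (A*A).trace := by linarith
    calc A.trace^2 = m * (A.trace^2 / m) := by field_simp
      _ ≤ m * (A*A).trace := by exact mul_le_mul_of_nonneg_left h' hmpos.le
  · intro h
    have hz : (C * C).trace = 0 := by rw [htr]; field_simp; linarith
    have := eq_zero_of_trace_mul_self m C hCsymm hz
    rw [hCdef, sub_eq_zero] at this
    exact this

/-- Measure-theoretic equality case of the Cauchy–Schwarz trace inequality: if `U` is a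
measurable family of symmetric `m × m` matrices over a probability space with
`∫ tr U dμ = √(m ∫ tr (U²) dμ)`, then `U = ((∫ tr U dμ)/m) • I` almost everywhere; in
particular `tr U` is a.e. equal to the constant `∫ tr U dμ`. -/
theorem ae_eq_smul_one_of_integral_trace_eq (m : ℕ) (hm : 1 ≤ m)
    {X : Type*} [MeasurableSpace X] (μ : Measure X) [IsProbabilityMeasure μ]
    (U : X → Matrix (Fin m) (Fin m) ℝ)
    (hmeas : ∀ i j, Measurable fun x => U x i j)
    (hsymm : ∀ x, (U x).IsSymm)
    (hint1 : Integrable (fun x => (U x).trace) μ)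
    (hint2 : Integrable (fun x => (U x * U x).trace) μ)
    (heq : ∫ x, (U x).trace ∂μ = Real.sqrt ((m : ℝ) * ∫ x, (U x * U x).trace ∂μ)) :
    (∀ᵐ x ∂μ, U x = ((∫ y, (U y).trace ∂μ) / (m : ℝ)) • (1 : Matrix (Fin m) (Fin m) ℝ)) ∧
    (∀ᵐ x ∂μ, (U x).trace = ∫ y, (U y).trace ∂μ) := by
  set f : X → ℝ := fun x => (U x).trace with hf
  set g : X → ℝ := fun x => (U x * U x).trace with hg
  set c : ℝ := ∫ y, (U y).trace ∂μ with hc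
  have hg0 : ∀ x, 0 ≤ g x := fun x => trace_mul_self_nonneg m (U x) (hsymm x)
  have hfg : ∀ x, f x ^ 2 ≤ m * g x := fun x => (ptA m hm (U x) (hsymm x)).1
  have hIg : 0 ≤ (m : ℝ) * ∫ x, g x ∂μ := by
    have : 0 ≤ ∫ x, g x ∂μ := integral_nonneg hg0
    positivity
  have heq2 : c ^ 2 = m * ∫ x, g x ∂μ := by
    rw [heq, Real.sq_sqrt hIg]
  -- integrability of f^2
  have hfsq : Integrable (fun x => f x ^ 2) μ := by
    refine Integrable.mono' (hint2.const_mul (m : ℝ)) ?_ ?_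
    · exact (hint1.aestronglyMeasurable.mul hint1.aestronglyMeasurable).congr
        (Filter.Eventually.of_forall fun x => (sq (f x)).symm)
    · exact Filter.Eventually.of_forall fun x => by
        rw [Real.norm_eq_abs, abs_of_nonneg (sq_nonneg _)]; exact hfg x
  have hint3 : Integrable (fun x => f x ^ 2 - 2 * c * f x) μ :=
    hfsq.sub (hint1.const_mul (2 * c))
  have hh1int : Integrable (fun x => (f x - c) ^ 2) μ := by
    have : (fun x => (f x - c) ^ 2) = fun x => (f x ^ 2 - 2 * c * f x) + c ^ 2 := by
      funext x; ring
    rw [this]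
    exact hint3.add (integrable_const _)
  have hh2int : Integrable (fun x => (m : ℝ) * g x - f x ^ 2) μ :=
    (hint2.const_mul (m : ℝ)).sub hfsq
  have hI1 : ∫ x, (f x - c) ^ 2 ∂μ = (∫ x, f x ^ 2 ∂μ) - c ^ 2 := by
    have h1 : ∫ x, (f x - c) ^ 2 ∂μ
        = ∫ x, ((f x ^ 2 - 2 * c * f x) + c ^ 2) ∂μ := by
      congr 1; funext x; ring
    rw [h1, integral_add hint3 (integrable_const _),
      integral_sub hfsq (hint1.const_mul (2 * c)), integral_const_mul, integral_const]
    have : ∫ x, f x ∂μ = c := rfl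
    rw [this]
    simp
    ring
  have hI2 : ∫ x, ((m : ℝ) * g x - f x ^ 2) ∂μ = c ^ 2 - ∫ x, f x ^ 2 ∂μ := by
    rw [integral_sub (hint2.const_mul (m : ℝ)) hfsq, integral_const_mul, ← heq2]
  have h1nn : 0 ≤ ∫ x, (f x - c) ^ 2 ∂μ := integral_nonneg fun x => sq_nonneg _
  have h2nn : 0 ≤ ∫ x, ((m : ℝ) * g x - f x ^ 2) ∂μ :=
    integral_nonneg fun x => by have := hfg x; simp only [Pi.zero_apply]; linarith
  have h1z : ∫ x, (f x - c) ^ 2 ∂μ = 0 := by rw [hI1] at *; linarith [hI2 ▸ h2nn]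
  have h2z : ∫ x, ((m : ℝ) * g x - f x ^ 2) ∂μ = 0 := by rw [hI2]; rw [hI1] at h1z; linarith
  have hae1 : ∀ᵐ x ∂μ, (f x - c) ^ 2 = 0 := by
    have := (integral_eq_zero_iff_of_nonneg (fun x => sq_nonneg (f x - c)) hh1int).1 h1z
    filter_upwards [this.le] with x hx using le_antisymm hx (sq_nonneg _)
  have hae2 : ∀ᵐ x ∂μ, (m : ℝ) * g x - f x ^ 2 = 0 := by
    have := (integral_eq_zero_iff_of_nonneg
      (fun x => by have := hfg x; simp only [Pi.zero_apply]; linarith) hh2int).1 h2z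
    filter_upwards [this.le] with x hx
    have := hfg x
    simp only [Pi.zero_apply] at hx
    linarith
  have key : ∀ᵐ x ∂μ, U x = (c / m) • (1 : Matrix (Fin m) (Fin m) ℝ) ∧ f x = c := by
    filter_upwards [hae1, hae2] with x h1 h2
    have hfc : f x = c := by
      have := pow_eq_zero_iff (n := 2) (by norm_num) |>.1 h1
      linarith
    have hxeq : (U x).trace ^ 2 = m * (U x * U x).trace := by
      have : f x ^ 2 = m * g x := by linarith
      exact this
    refine ⟨?_, hfc⟩
    have := (ptA m hm (U x) (hsymm x)).2 hxeq
    rwa [show (U x).trace = c from hfc] at this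
  exact ⟨key.mono fun x hx => hx.1, key.mono fun x hx => hx.2⟩
end
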